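/- Let C be an elasticity tensor with harmonic components (λ, μ, a, b, D) as in the harmonic decomposition. If the stabilizer of d₂(D) in SO(3) is contained both in the stabilizer of a and in the stabilizer of b (the material genericity assumption), then the stabilizer of C in SO(3) equals the stabilizer of D: {g ∈ SO(3) | g·C = C} = {g ∈ SO(3) | g·D = D}. -/
import Mathlib


open Matrix BigOperators

abbrev Mat3 := Matrix (Fin 3) (Fin 3) ℝ
abbrev T4 := Fin 3 → Fin 3 → Fin 3 → Fin 3 → ℝ

/-- `g ∈ SO(3)`: real orthogonal 3×3 matrix of determinant 1. -/
def IsSO3 (g : Mat3) : Prop := g * gᵀ = 1 ∧ g.det = 1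

/-- A harmonic fourth-order tensor: totally symmetric and traceless. -/
def IsHarm (D : T4) : Prop :=
  (∀ i j k l, D i j k l = D j i k l) ∧
  (∀ i j k l, D i j k l = D i k j l) ∧
  (∀ i j k l, D i j k l = D i j l k) ∧
  (∀ i j, ∑ k, D k k i j = 0)

/-- The action of a rotation `g` on a fourth-order tensor. -/
noncomputable def act (g : Mat3) (D : T4) : T4 := fun i j k l =>
  ∑ p, ∑ q, ∑ r, ∑ s, g i p * g j q * g k r * g l s * D p q r s

/-- `D²`, the square of a fourth-order tensor. -/
noncomputable def sqT (D : T4) : T4 := fun i j k l => ∑ p, ∑ q, D i j p q * D p q k l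

/-- `D³`, the cube of a fourth-order tensor. -/
noncomputable def cbT (D : T4) : T4 := fun i j k l => ∑ p, ∑ q, sqT D i j p q * D p q k l

/-- The second-order Boehler covariant `d₂(D) j l = ∑ᵢ (D²) i j i l`. -/
noncomputable def d2 (D : T4) : Mat3 := Matrix.of fun j l => ∑ i, sqT D i j i l

/-- The second-order covariant `d₃(D) j l = ∑ᵢ (D³) i j i l`. -/
noncomputable def d3 (D : T4) : Mat3 := Matrix.of fun j l => ∑ i, cbT D i j i l

/-- Fundamental invariant `J₂ = tr d₂`. -/
noncomputable def J2 (D : T4) : ℝ := (d2 D).trace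
/-- Fundamental invariant `J₃ = tr d₃`. -/
noncomputable def J3 (D : T4) : ℝ := (d3 D).trace
/-- Fundamental invariant `J₄ = tr(d₂²)`. -/
noncomputable def J4 (D : T4) : ℝ := (d2 D * d2 D).trace
/-- Fundamental invariant `J₅ = ∑ (d₂)ᵢⱼ D i j k l (d₂)ₖₗ`. -/
noncomputable def J5 (D : T4) : ℝ :=
  ∑ i, ∑ j, ∑ k, ∑ l, d2 D i j * D i j k l * d2 D k l
/-- Fundamental invariant `J₆ = tr(d₂³)`. -/
noncomputable def J6 (D : T4) : ℝ := (d2 D * d2 D * d2 D).trace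
/-- Fundamental invariant `J₇ = ∑ (d₂²)ᵢⱼ D i j k l (d₂)ₖₗ`. -/
noncomputable def J7 (D : T4) : ℝ :=
  ∑ i, ∑ j, ∑ k, ∑ l, (d2 D * d2 D) i j * D i j k l * d2 D k l
/-- Fundamental invariant `J₈ = ∑ (d₂²)ᵢⱼ (D²) i j k l (d₂)ₖₗ`. -/
noncomputable def J8 (D : T4) : ℝ :=
  ∑ i, ∑ j, ∑ k, ∑ l, (d2 D * d2 D) i j * sqT D i j k l * d2 D k l
/-- Fundamental invariant `J₉ = ∑ (d₂²)ᵢⱼ D i j k l (d₂²)ₖₗ`. -/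
noncomputable def J9 (D : T4) : ℝ :=
  ∑ i, ∑ j, ∑ k, ∑ l, (d2 D * d2 D) i j * D i j k l * (d2 D * d2 D) k l
/-- Fundamental invariant `J₁₀ = ∑ (d₂²)ᵢⱼ (D²) i j k l (d₂²)ₖₗ`. -/
noncomputable def J10 (D : T4) : ℝ :=
  ∑ i, ∑ j, ∑ k, ∑ l, (d2 D * d2 D) i j * sqT D i j k l * (d2 D * d2 D) k l

/-- The totally symmetric tensor whose value at `(i,j,k,l)` depends only on the
multiset of indices `{i,j,k,l}`. -/
noncomputable def symT (f : Multiset (Fin 3) → ℝ) : T4 := fun i j k l => f {i, j, k, l}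

/-- Kronecker delta on `Fin 3`. -/
def kd (i j : Fin 3) : ℝ := if i = j then 1 else 0

/-- An elasticity tensor: minor and major index symmetries. -/
def IsEla (C : T4) : Prop :=
  ∀ i j k l, C i j k l = C j i k l ∧ C i j k l = C i j l k ∧ C i j k l = C k l i j

/-- The harmonic decomposition equation `C = (λ, μ, a, b, D)`. -/
def HarmDecomp (C : T4) (lam mu : ℝ) (a b : Mat3) (D : T4) : Prop :=
  ∀ i j k l, C i j k l =
    lam * kd i j * kd k l + mu * (kd i k * kd j l + kd i l * kd j k) +
    kd i j * a k l + kd k l * a i j +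
    kd i k * b j l + kd j l * b i k + kd i l * b j k + kd j k * b i l +
    D i j k l


section AuxStab

lemma kdd (i : Fin 3) : kd i i = 1 := by simp [kd]
lemma kd01 : kd 0 1 = 0 := by simp [kd, Fin.ext_iff]
lemma kd02 : kd 0 2 = 0 := by simp [kd, Fin.ext_iff]
lemma kd10 : kd 1 0 = 0 := by simp [kd, Fin.ext_iff]
lemma kd12 : kd 1 2 = 0 := by simp [kd, Fin.ext_iff]
lemma kd20 : kd 2 0 = 0 := by simp [kd, Fin.ext_iff]
lemma kd21 : kd 2 1 = 0 := by simp [kd, Fin.ext_iff]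
lemma fin_mk_two (h : 2 < 3) : (⟨2, h⟩ : Fin 3) = 2 := rfl


lemma act_decomp (g : Mat3)
    (hrow : ∀ x y, g x 0 * g y 0 + g x 1 * g y 1 + g x 2 * g y 2 = kd x y)
    (C : T4) (lam mu : ℝ) (a b : Mat3) (D : T4) (hdec : HarmDecomp C lam mu a b D) :
    HarmDecomp (act g C) lam mu (g * a * gᵀ) (g * b * gᵀ) (act g D) := by
  have hd : ∀ i j k l, C i j k l =
      lam * kd i j * kd k l + mu * (kd i k * kd j l + kd i l * kd j k) +
      kd i j * a k l + kd k l * a i j +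
      kd i k * b j l + kd j l * b i k + kd i l * b j k + kd j k * b i l +
      D i j k l := hdec
  intro i j k l
  simp only [act, Fin.sum_univ_three, hd, Matrix.mul_apply, Matrix.transpose_apply,
    kdd, kd01, kd02, kd10, kd12, kd20, kd21, mul_zero, zero_mul, mul_one, one_mul,
    add_zero, zero_add, mul_add, add_mul]
  linear_combination
    (lam * (g k 0 * g l 0 + g k 1 * g l 1 + g k 2 * g l 2) + (g k 0 * g l 0 * a 0 0 + g k 0 * g l 1 * a 0 1 + g k 0 * g l 2 * a 0 2 + g k 1 * g l 0 * a 1 0 + g k 1 * g l 1 * a 1 1 + g k 1 * g l 2 * a 1 2 + g k 2 * g l 0 * a 2 0 + g k 2 * g l 1 * a 2 1 + g k 2 * g l 2 * a 2 2)) * hrow i j +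
    (lam * kd i j + (g i 0 * g j 0 * a 0 0 + g i 0 * g j 1 * a 0 1 + g i 0 * g j 2 * a 0 2 + g i 1 * g j 0 * a 1 0 + g i 1 * g j 1 * a 1 1 + g i 1 * g j 2 * a 1 2 + g i 2 * g j 0 * a 2 0 + g i 2 * g j 1 * a 2 1 + g i 2 * g j 2 * a 2 2)) * hrow k l +
    (mu * (g j 0 * g l 0 + g j 1 * g l 1 + g j 2 * g l 2) + (g j 0 * g l 0 * b 0 0 + g j 0 * g l 1 * b 0 1 + g j 0 * g l 2 * b 0 2 + g j 1 * g l 0 * b 1 0 + g j 1 * g l 1 * b 1 1 + g j 1 * g l 2 * b 1 2 + g j 2 * g l 0 * b 2 0 + g j 2 * g l 1 * b 2 1 + g j 2 * g l 2 * b 2 2)) * hrow i k +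
    (mu * kd i k + (g i 0 * g k 0 * b 0 0 + g i 0 * g k 1 * b 0 1 + g i 0 * g k 2 * b 0 2 + g i 1 * g k 0 * b 1 0 + g i 1 * g k 1 * b 1 1 + g i 1 * g k 2 * b 1 2 + g i 2 * g k 0 * b 2 0 + g i 2 * g k 1 * b 2 1 + g i 2 * g k 2 * b 2 2)) * hrow j l +
    (mu * (g j 0 * g k 0 + g j 1 * g k 1 + g j 2 * g k 2) + (g j 0 * g k 0 * b 0 0 + g j 0 * g k 1 * b 0 1 + g j 0 * g k 2 * b 0 2 + g j 1 * g k 0 * b 1 0 + g j 1 * g k 1 * b 1 1 + g j 1 * g k 2 * b 1 2 + g j 2 * g k 0 * b 2 0 + g j 2 * g k 1 * b 2 1 + g j 2 * g k 2 * b 2 2)) * hrow i l +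
    (mu * kd i l + (g i 0 * g l 0 * b 0 0 + g i 0 * g l 1 * b 0 1 + g i 0 * g l 2 * b 0 2 + g i 1 * g l 0 * b 1 0 + g i 1 * g l 1 * b 1 1 + g i 1 * g l 2 * b 1 2 + g i 2 * g l 0 * b 2 0 + g i 2 * g l 1 * b 2 1 + g i 2 * g l 2 * b 2 2)) * hrow j k


lemma actD_tr1 (g : Mat3) (D : T4)
    (hcol : ∀ x y, g 0 x * g 0 y + g 1 x * g 1 y + g 2 x * g 2 y = kd x y)
    (hDt : ∀ r s, D 0 0 r s + D 1 1 r s + D 2 2 r s = 0) :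
    ∀ i j, act g D 0 0 i j + act g D 1 1 i j + act g D 2 2 i j = 0 := by
  have c00 : g 0 0 * g 0 0 + g 1 0 * g 1 0 + g 2 0 * g 2 0 = 1 := by rw [hcol 0 0]; exact kdd 0
  have c01 : g 0 0 * g 0 1 + g 1 0 * g 1 1 + g 2 0 * g 2 1 = 0 := by rw [hcol 0 1]; exact kd01
  have c02 : g 0 0 * g 0 2 + g 1 0 * g 1 2 + g 2 0 * g 2 2 = 0 := by rw [hcol 0 2]; exact kd02
  have c10 : g 0 1 * g 0 0 + g 1 1 * g 1 0 + g 2 1 * g 2 0 = 0 := by rw [hcol 1 0]; exact kd10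
  have c11 : g 0 1 * g 0 1 + g 1 1 * g 1 1 + g 2 1 * g 2 1 = 1 := by rw [hcol 1 1]; exact kdd 1
  have c12 : g 0 1 * g 0 2 + g 1 1 * g 1 2 + g 2 1 * g 2 2 = 0 := by rw [hcol 1 2]; exact kd12
  have c20 : g 0 2 * g 0 0 + g 1 2 * g 1 0 + g 2 2 * g 2 0 = 0 := by rw [hcol 2 0]; exact kd20
  have c21 : g 0 2 * g 0 1 + g 1 2 * g 1 1 + g 2 2 * g 2 1 = 0 := by rw [hcol 2 1]; exact kd21
  have c22 : g 0 2 * g 0 2 + g 1 2 * g 1 2 + g 2 2 * g 2 2 = 1 := by rw [hcol 2 2]; exact kdd 2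
  intro i j
  simp only [act, Fin.sum_univ_three]
  linear_combination
    (g i 0 * g j 0 * D 0 0 0 0 + g i 0 * g j 1 * D 0 0 0 1 + g i 0 * g j 2 * D 0 0 0 2 + g i 1 * g j 0 * D 0 0 1 0 + g i 1 * g j 1 * D 0 0 1 1 + g i 1 * g j 2 * D 0 0 1 2 + g i 2 * g j 0 * D 0 0 2 0 + g i 2 * g j 1 * D 0 0 2 1 + g i 2 * g j 2 * D 0 0 2 2) * c00 +
    (g i 0 * g j 0 * D 0 1 0 0 + g i 0 * g j 1 * D 0 1 0 1 + g i 0 * g j 2 * D 0 1 0 2 + g i 1 * g j 0 * D 0 1 1 0 + g i 1 * g j 1 * D 0 1 1 1 + g i 1 * g j 2 * D 0 1 1 2 + g i 2 * g j 0 * D 0 1 2 0 + g i 2 * g j 1 * D 0 1 2 1 + g i 2 * g j 2 * D 0 1 2 2) * c01 +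
    (g i 0 * g j 0 * D 0 2 0 0 + g i 0 * g j 1 * D 0 2 0 1 + g i 0 * g j 2 * D 0 2 0 2 + g i 1 * g j 0 * D 0 2 1 0 + g i 1 * g j 1 * D 0 2 1 1 + g i 1 * g j 2 * D 0 2 1 2 + g i 2 * g j 0 * D 0 2 2 0 + g i 2 * g j 1 * D 0 2 2 1 + g i 2 * g j 2 * D 0 2 2 2) * c02 +
    (g i 0 * g j 0 * D 1 0 0 0 + g i 0 * g j 1 * D 1 0 0 1 + g i 0 * g j 2 * D 1 0 0 2 + g i 1 * g j 0 * D 1 0 1 0 + g i 1 * g j 1 * D 1 0 1 1 + g i 1 * g j 2 * D 1 0 1 2 + g i 2 * g j 0 * D 1 0 2 0 + g i 2 * g j 1 * D 1 0 2 1 + g i 2 * g j 2 * D 1 0 2 2) * c10 +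
    (g i 0 * g j 0 * D 1 1 0 0 + g i 0 * g j 1 * D 1 1 0 1 + g i 0 * g j 2 * D 1 1 0 2 + g i 1 * g j 0 * D 1 1 1 0 + g i 1 * g j 1 * D 1 1 1 1 + g i 1 * g j 2 * D 1 1 1 2 + g i 2 * g j 0 * D 1 1 2 0 + g i 2 * g j 1 * D 1 1 2 1 + g i 2 * g j 2 * D 1 1 2 2) * c11 +
    (g i 0 * g j 0 * D 1 2 0 0 + g i 0 * g j 1 * D 1 2 0 1 + g i 0 * g j 2 * D 1 2 0 2 + g i 1 * g j 0 * D 1 2 1 0 + g i 1 * g j 1 * D 1 2 1 1 + g i 1 * g j 2 * D 1 2 1 2 + g i 2 * g j 0 * D 1 2 2 0 + g i 2 * g j 1 * D 1 2 2 1 + g i 2 * g j 2 * D 1 2 2 2) * c12 +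
    (g i 0 * g j 0 * D 2 0 0 0 + g i 0 * g j 1 * D 2 0 0 1 + g i 0 * g j 2 * D 2 0 0 2 + g i 1 * g j 0 * D 2 0 1 0 + g i 1 * g j 1 * D 2 0 1 1 + g i 1 * g j 2 * D 2 0 1 2 + g i 2 * g j 0 * D 2 0 2 0 + g i 2 * g j 1 * D 2 0 2 1 + g i 2 * g j 2 * D 2 0 2 2) * c20 +
    (g i 0 * g j 0 * D 2 1 0 0 + g i 0 * g j 1 * D 2 1 0 1 + g i 0 * g j 2 * D 2 1 0 2 + g i 1 * g j 0 * D 2 1 1 0 + g i 1 * g j 1 * D 2 1 1 1 + g i 1 * g j 2 * D 2 1 1 2 + g i 2 * g j 0 * D 2 1 2 0 + g i 2 * g j 1 * D 2 1 2 1 + g i 2 * g j 2 * D 2 1 2 2) * c21 +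
    (g i 0 * g j 0 * D 2 2 0 0 + g i 0 * g j 1 * D 2 2 0 1 + g i 0 * g j 2 * D 2 2 0 2 + g i 1 * g j 0 * D 2 2 1 0 + g i 1 * g j 1 * D 2 2 1 1 + g i 1 * g j 2 * D 2 2 1 2 + g i 2 * g j 0 * D 2 2 2 0 + g i 2 * g j 1 * D 2 2 2 1 + g i 2 * g j 2 * D 2 2 2 2) * c22 +
    g i 0 * g j 0 * hDt 0 0 +
    g i 0 * g j 1 * hDt 0 1 +
    g i 0 * g j 2 * hDt 0 2 +
    g i 1 * g j 0 * hDt 1 0 +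
    g i 1 * g j 1 * hDt 1 1 +
    g i 1 * g j 2 * hDt 1 2 +
    g i 2 * g j 0 * hDt 2 0 +
    g i 2 * g j 1 * hDt 2 1 +
    g i 2 * g j 2 * hDt 2 2


lemma actD_tr2 (g : Mat3) (D : T4)
    (hcol : ∀ x y, g 0 x * g 0 y + g 1 x * g 1 y + g 2 x * g 2 y = kd x y)
    (hDt2 : ∀ q s, D 0 q 0 s + D 1 q 1 s + D 2 q 2 s = 0) :
    ∀ i j, act g D 0 i 0 j + act g D 1 i 1 j + act g D 2 i 2 j = 0 := by
  have c00 : g 0 0 * g 0 0 + g 1 0 * g 1 0 + g 2 0 * g 2 0 = 1 := by rw [hcol 0 0]; exact kdd 0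
  have c01 : g 0 0 * g 0 1 + g 1 0 * g 1 1 + g 2 0 * g 2 1 = 0 := by rw [hcol 0 1]; exact kd01
  have c02 : g 0 0 * g 0 2 + g 1 0 * g 1 2 + g 2 0 * g 2 2 = 0 := by rw [hcol 0 2]; exact kd02
  have c10 : g 0 1 * g 0 0 + g 1 1 * g 1 0 + g 2 1 * g 2 0 = 0 := by rw [hcol 1 0]; exact kd10
  have c11 : g 0 1 * g 0 1 + g 1 1 * g 1 1 + g 2 1 * g 2 1 = 1 := by rw [hcol 1 1]; exact kdd 1
  have c12 : g 0 1 * g 0 2 + g 1 1 * g 1 2 + g 2 1 * g 2 2 = 0 := by rw [hcol 1 2]; exact kd12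
  have c20 : g 0 2 * g 0 0 + g 1 2 * g 1 0 + g 2 2 * g 2 0 = 0 := by rw [hcol 2 0]; exact kd20
  have c21 : g 0 2 * g 0 1 + g 1 2 * g 1 1 + g 2 2 * g 2 1 = 0 := by rw [hcol 2 1]; exact kd21
  have c22 : g 0 2 * g 0 2 + g 1 2 * g 1 2 + g 2 2 * g 2 2 = 1 := by rw [hcol 2 2]; exact kdd 2
  intro i j
  simp only [act, Fin.sum_univ_three]
  linear_combination
    (g i 0 * g j 0 * D 0 0 0 0 + g i 0 * g j 1 * D 0 0 0 1 + g i 0 * g j 2 * D 0 0 0 2 + g i 1 * g j 0 * D 0 1 0 0 + g i 1 * g j 1 * D 0 1 0 1 + g i 1 * g j 2 * D 0 1 0 2 + g i 2 * g j 0 * D 0 2 0 0 + g i 2 * g j 1 * D 0 2 0 1 + g i 2 * g j 2 * D 0 2 0 2) * c00 +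
    (g i 0 * g j 0 * D 0 0 1 0 + g i 0 * g j 1 * D 0 0 1 1 + g i 0 * g j 2 * D 0 0 1 2 + g i 1 * g j 0 * D 0 1 1 0 + g i 1 * g j 1 * D 0 1 1 1 + g i 1 * g j 2 * D 0 1 1 2 + g i 2 * g j 0 * D 0 2 1 0 + g i 2 * g j 1 * D 0 2 1 1 + g i 2 * g j 2 * D 0 2 1 2) * c01 +
    (g i 0 * g j 0 * D 0 0 2 0 + g i 0 * g j 1 * D 0 0 2 1 + g i 0 * g j 2 * D 0 0 2 2 + g i 1 * g j 0 * D 0 1 2 0 + g i 1 * g j 1 * D 0 1 2 1 + g i 1 * g j 2 * D 0 1 2 2 + g i 2 * g j 0 * D 0 2 2 0 + g i 2 * g j 1 * D 0 2 2 1 + g i 2 * g j 2 * D 0 2 2 2) * c02 +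
    (g i 0 * g j 0 * D 1 0 0 0 + g i 0 * g j 1 * D 1 0 0 1 + g i 0 * g j 2 * D 1 0 0 2 + g i 1 * g j 0 * D 1 1 0 0 + g i 1 * g j 1 * D 1 1 0 1 + g i 1 * g j 2 * D 1 1 0 2 + g i 2 * g j 0 * D 1 2 0 0 + g i 2 * g j 1 * D 1 2 0 1 + g i 2 * g j 2 * D 1 2 0 2) * c10 +
    (g i 0 * g j 0 * D 1 0 1 0 + g i 0 * g j 1 * D 1 0 1 1 + g i 0 * g j 2 * D 1 0 1 2 + g i 1 * g j 0 * D 1 1 1 0 + g i 1 * g j 1 * D 1 1 1 1 + g i 1 * g j 2 * D 1 1 1 2 + g i 2 * g j 0 * D 1 2 1 0 + g i 2 * g j 1 * D 1 2 1 1 + g i 2 * g j 2 * D 1 2 1 2) * c11 +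
    (g i 0 * g j 0 * D 1 0 2 0 + g i 0 * g j 1 * D 1 0 2 1 + g i 0 * g j 2 * D 1 0 2 2 + g i 1 * g j 0 * D 1 1 2 0 + g i 1 * g j 1 * D 1 1 2 1 + g i 1 * g j 2 * D 1 1 2 2 + g i 2 * g j 0 * D 1 2 2 0 + g i 2 * g j 1 * D 1 2 2 1 + g i 2 * g j 2 * D 1 2 2 2) * c12 +
    (g i 0 * g j 0 * D 2 0 0 0 + g i 0 * g j 1 * D 2 0 0 1 + g i 0 * g j 2 * D 2 0 0 2 + g i 1 * g j 0 * D 2 1 0 0 + g i 1 * g j 1 * D 2 1 0 1 + g i 1 * g j 2 * D 2 1 0 2 + g i 2 * g j 0 * D 2 2 0 0 + g i 2 * g j 1 * D 2 2 0 1 + g i 2 * g j 2 * D 2 2 0 2) * c20 +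
    (g i 0 * g j 0 * D 2 0 1 0 + g i 0 * g j 1 * D 2 0 1 1 + g i 0 * g j 2 * D 2 0 1 2 + g i 1 * g j 0 * D 2 1 1 0 + g i 1 * g j 1 * D 2 1 1 1 + g i 1 * g j 2 * D 2 1 1 2 + g i 2 * g j 0 * D 2 2 1 0 + g i 2 * g j 1 * D 2 2 1 1 + g i 2 * g j 2 * D 2 2 1 2) * c21 +
    (g i 0 * g j 0 * D 2 0 2 0 + g i 0 * g j 1 * D 2 0 2 1 + g i 0 * g j 2 * D 2 0 2 2 + g i 1 * g j 0 * D 2 1 2 0 + g i 1 * g j 1 * D 2 1 2 1 + g i 1 * g j 2 * D 2 1 2 2 + g i 2 * g j 0 * D 2 2 2 0 + g i 2 * g j 1 * D 2 2 2 1 + g i 2 * g j 2 * D 2 2 2 2) * c22 +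
    g i 0 * g j 0 * hDt2 0 0 +
    g i 0 * g j 1 * hDt2 0 1 +
    g i 0 * g j 2 * hDt2 0 2 +
    g i 1 * g j 0 * hDt2 1 0 +
    g i 1 * g j 1 * hDt2 1 1 +
    g i 1 * g j 2 * hDt2 1 2 +
    g i 2 * g j 0 * hDt2 2 0 +
    g i 2 * g j 1 * hDt2 2 1 +
    g i 2 * g j 2 * hDt2 2 2


lemma trace1_gen (C : T4) (lam mu : ℝ) (a b : Mat3) (D : T4)
    (hdec : HarmDecomp C lam mu a b D)
    (hDt : ∀ i j, D 0 0 i j + D 1 1 i j + D 2 2 i j = 0) (i j : Fin 3) :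
    ∑ k, C k k i j = (3*lam + 2*mu) * kd i j + 3 * a i j +
      kd i j * (a 0 0 + a 1 1 + a 2 2) + 2 * (b i j + b j i) := by
  have hd : ∀ i j k l, C i j k l =
      lam * kd i j * kd k l + mu * (kd i k * kd j l + kd i l * kd j k) +
      kd i j * a k l + kd k l * a i j +
      kd i k * b j l + kd j l * b i k + kd i l * b j k + kd j k * b i l +
      D i j k l := hdec
  rw [Fin.sum_univ_three, hd 0 0 i j, hd 1 1 i j, hd 2 2 i j]
  fin_cases i <;> fin_cases j <;>
    simp only [fin_mk_two, Fin.mk_zero, Fin.mk_one] <;>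
    norm_num [kd, Fin.ext_iff] <;>
    first | linear_combination hDt 0 0 | linear_combination hDt 0 1 | linear_combination hDt 0 2 | linear_combination hDt 1 0 | linear_combination hDt 1 1 | linear_combination hDt 1 2 | linear_combination hDt 2 0 | linear_combination hDt 2 1 | linear_combination hDt 2 2

lemma trace2_gen (C : T4) (lam mu : ℝ) (a b : Mat3) (D : T4)
    (hdec : HarmDecomp C lam mu a b D)
    (hDt : ∀ i j, D 0 i 0 j + D 1 i 1 j + D 2 i 2 j = 0) (i j : Fin 3) :
    ∑ k, C k i k j = (lam + 4*mu) * kd i j + a i j + a j i + 5 * b i j +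
      kd i j * (b 0 0 + b 1 1 + b 2 2) := by
  have hd : ∀ i j k l, C i j k l =
      lam * kd i j * kd k l + mu * (kd i k * kd j l + kd i l * kd j k) +
      kd i j * a k l + kd k l * a i j +
      kd i k * b j l + kd j l * b i k + kd i l * b j k + kd j k * b i l +
      D i j k l := hdec
  rw [Fin.sum_univ_three, hd 0 i 0 j, hd 1 i 1 j, hd 2 i 2 j]
  fin_cases i <;> fin_cases j <;>
    simp only [fin_mk_two, Fin.mk_zero, Fin.mk_one] <;>
    norm_num [kd, Fin.ext_iff] <;>
    first | linear_combination hDt 0 0 | linear_combination hDt 0 1 | linear_combination hDt 0 2 | linear_combination hDt 1 0 | linear_combination hDt 1 1 | linear_combination hDt 1 2 | linear_combination hDt 2 0 | linear_combination hDt 2 1 | linear_combination hDt 2 2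


open Kronecker in
lemma sq_act (g : Mat3) (hg1 : g * gᵀ = 1) (D : T4) : sqT (act g D) = act g (sqT D) := by
  have hg2 : gᵀ * g = 1 := mul_eq_one_comm.mp hg1
  have hGG : (g ⊗ₖ g)ᵀ * (g ⊗ₖ g) = (1 : Matrix (Fin 3 × Fin 3) (Fin 3 × Fin 3) ℝ) := by
    have ht : (g ⊗ₖ g)ᵀ = gᵀ ⊗ₖ gᵀ := rfl
    rw [ht, ← Matrix.mul_kronecker_mul, hg2, Matrix.one_kronecker_one]
  have hM : ∀ E : T4,
      Matrix.of (fun p q : Fin 3 × Fin 3 => act g E p.1 p.2 q.1 q.2) =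
        (g ⊗ₖ g) * Matrix.of (fun p q : Fin 3 × Fin 3 => E p.1 p.2 q.1 q.2) * (g ⊗ₖ g)ᵀ := by
    intro E
    ext ⟨i, j⟩ ⟨k, l⟩
    simp only [Matrix.of_apply, act, Matrix.mul_apply, Matrix.transpose_apply,
      Matrix.kroneckerMap_apply, Fintype.sum_prod_type, Fin.sum_univ_three]
    ring
  have hS : ∀ E : T4,
      Matrix.of (fun p q : Fin 3 × Fin 3 => sqT E p.1 p.2 q.1 q.2) =
        Matrix.of (fun p q : Fin 3 × Fin 3 => E p.1 p.2 q.1 q.2) *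
          Matrix.of (fun p q : Fin 3 × Fin 3 => E p.1 p.2 q.1 q.2) := by
    intro E
    ext ⟨i, j⟩ ⟨k, l⟩
    simp only [Matrix.of_apply, sqT, Matrix.mul_apply, Fintype.sum_prod_type]
  have hassoc : ∀ A : Matrix (Fin 3 × Fin 3) (Fin 3 × Fin 3) ℝ,
      ((g ⊗ₖ g) * A * (g ⊗ₖ g)ᵀ) * ((g ⊗ₖ g) * A * (g ⊗ₖ g)ᵀ) =
        (g ⊗ₖ g) * (A * ((g ⊗ₖ g)ᵀ * (g ⊗ₖ g)) * A) * (g ⊗ₖ g)ᵀ := by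
    intro A; noncomm_ring
  have key : Matrix.of (fun p q : Fin 3 × Fin 3 => sqT (act g D) p.1 p.2 q.1 q.2) =
      Matrix.of (fun p q : Fin 3 × Fin 3 => act g (sqT D) p.1 p.2 q.1 q.2) := by
    rw [hS, hM, hM, hS, hassoc, hGG, Matrix.mul_one]
  funext i j k l
  exact Matrix.ext_iff.2 key (i, j) (k, l)


lemma d2_cov (g : Mat3) (hg1 : g * gᵀ = 1) (D : T4) : d2 (act g D) = g * d2 D * gᵀ := by
  have hg2 : gᵀ * g = 1 := mul_eq_one_comm.mp hg1
  have hcol : ∀ x y, g 0 x * g 0 y + g 1 x * g 1 y + g 2 x * g 2 y = kd x y := by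
    intro x y
    have h := congrFun (congrFun hg2 x) y
    simp only [Matrix.mul_apply, Matrix.transpose_apply, Fin.sum_univ_three,
      Matrix.one_apply] at h
    simpa [kd] using h
  have c00 : g 0 0 * g 0 0 + g 1 0 * g 1 0 + g 2 0 * g 2 0 = 1 := by rw [hcol 0 0]; exact kdd 0
  have c01 : g 0 0 * g 0 1 + g 1 0 * g 1 1 + g 2 0 * g 2 1 = 0 := by rw [hcol 0 1]; exact kd01
  have c02 : g 0 0 * g 0 2 + g 1 0 * g 1 2 + g 2 0 * g 2 2 = 0 := by rw [hcol 0 2]; exact kd02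
  have c10 : g 0 1 * g 0 0 + g 1 1 * g 1 0 + g 2 1 * g 2 0 = 0 := by rw [hcol 1 0]; exact kd10
  have c11 : g 0 1 * g 0 1 + g 1 1 * g 1 1 + g 2 1 * g 2 1 = 1 := by rw [hcol 1 1]; exact kdd 1
  have c12 : g 0 1 * g 0 2 + g 1 1 * g 1 2 + g 2 1 * g 2 2 = 0 := by rw [hcol 1 2]; exact kd12
  have c20 : g 0 2 * g 0 0 + g 1 2 * g 1 0 + g 2 2 * g 2 0 = 0 := by rw [hcol 2 0]; exact kd20
  have c21 : g 0 2 * g 0 1 + g 1 2 * g 1 1 + g 2 2 * g 2 1 = 0 := by rw [hcol 2 1]; exact kd21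
  have c22 : g 0 2 * g 0 2 + g 1 2 * g 1 2 + g 2 2 * g 2 2 = 1 := by rw [hcol 2 2]; exact kdd 2
  have hsq := sq_act g hg1 D
  ext j l
  simp only [d2, Matrix.of_apply, Matrix.mul_apply, Matrix.transpose_apply]
  simp only [hsq]
  simp only [act, Fin.sum_univ_three]
  linear_combination
    (g j 0 * g l 0 * sqT D 0 0 0 0 + g j 0 * g l 1 * sqT D 0 0 0 1 + g j 0 * g l 2 * sqT D 0 0 0 2 + g j 1 * g l 0 * sqT D 0 1 0 0 + g j 1 * g l 1 * sqT D 0 1 0 1 + g j 1 * g l 2 * sqT D 0 1 0 2 + g j 2 * g l 0 * sqT D 0 2 0 0 + g j 2 * g l 1 * sqT D 0 2 0 1 + g j 2 * g l 2 * sqT D 0 2 0 2) * c00 +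
    (g j 0 * g l 0 * sqT D 0 0 1 0 + g j 0 * g l 1 * sqT D 0 0 1 1 + g j 0 * g l 2 * sqT D 0 0 1 2 + g j 1 * g l 0 * sqT D 0 1 1 0 + g j 1 * g l 1 * sqT D 0 1 1 1 + g j 1 * g l 2 * sqT D 0 1 1 2 + g j 2 * g l 0 * sqT D 0 2 1 0 + g j 2 * g l 1 * sqT D 0 2 1 1 + g j 2 * g l 2 * sqT D 0 2 1 2) * c01 +
    (g j 0 * g l 0 * sqT D 0 0 2 0 + g j 0 * g l 1 * sqT D 0 0 2 1 + g j 0 * g l 2 * sqT D 0 0 2 2 + g j 1 * g l 0 * sqT D 0 1 2 0 + g j 1 * g l 1 * sqT D 0 1 2 1 + g j 1 * g l 2 * sqT D 0 1 2 2 + g j 2 * g l 0 * sqT D 0 2 2 0 + g j 2 * g l 1 * sqT D 0 2 2 1 + g j 2 * g l 2 * sqT D 0 2 2 2) * c02 +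
    (g j 0 * g l 0 * sqT D 1 0 0 0 + g j 0 * g l 1 * sqT D 1 0 0 1 + g j 0 * g l 2 * sqT D 1 0 0 2 + g j 1 * g l 0 * sqT D 1 1 0 0 + g j 1 * g l 1 * sqT D 1 1 0 1 + g j 1 * g l 2 * sqT D 1 1 0 2 + g j 2 * g l 0 * sqT D 1 2 0 0 + g j 2 * g l 1 * sqT D 1 2 0 1 + g j 2 * g l 2 * sqT D 1 2 0 2) * c10 +
    (g j 0 * g l 0 * sqT D 1 0 1 0 + g j 0 * g l 1 * sqT D 1 0 1 1 + g j 0 * g l 2 * sqT D 1 0 1 2 + g j 1 * g l 0 * sqT D 1 1 1 0 + g j 1 * g l 1 * sqT D 1 1 1 1 + g j 1 * g l 2 * sqT D 1 1 1 2 + g j 2 * g l 0 * sqT D 1 2 1 0 + g j 2 * g l 1 * sqT D 1 2 1 1 + g j 2 * g l 2 * sqT D 1 2 1 2) * c11 +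
    (g j 0 * g l 0 * sqT D 1 0 2 0 + g j 0 * g l 1 * sqT D 1 0 2 1 + g j 0 * g l 2 * sqT D 1 0 2 2 + g j 1 * g l 0 * sqT D 1 1 2 0 + g j 1 * g l 1 * sqT D 1 1 2 1 + g j 1 * g l 2 * sqT D 1 1 2 2 + g j 2 * g l 0 * sqT D 1 2 2 0 + g j 2 * g l 1 * sqT D 1 2 2 1 + g j 2 * g l 2 * sqT D 1 2 2 2) * c12 +
    (g j 0 * g l 0 * sqT D 2 0 0 0 + g j 0 * g l 1 * sqT D 2 0 0 1 + g j 0 * g l 2 * sqT D 2 0 0 2 + g j 1 * g l 0 * sqT D 2 1 0 0 + g j 1 * g l 1 * sqT D 2 1 0 1 + g j 1 * g l 2 * sqT D 2 1 0 2 + g j 2 * g l 0 * sqT D 2 2 0 0 + g j 2 * g l 1 * sqT D 2 2 0 1 + g j 2 * g l 2 * sqT D 2 2 0 2) * c20 +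
    (g j 0 * g l 0 * sqT D 2 0 1 0 + g j 0 * g l 1 * sqT D 2 0 1 1 + g j 0 * g l 2 * sqT D 2 0 1 2 + g j 1 * g l 0 * sqT D 2 1 1 0 + g j 1 * g l 1 * sqT D 2 1 1 1 + g j 1 * g l 2 * sqT D 2 1 1 2 + g j 2 * g l 0 * sqT D 2 2 1 0 + g j 2 * g l 1 * sqT D 2 2 1 1 + g j 2 * g l 2 * sqT D 2 2 1 2) * c21 +
    (g j 0 * g l 0 * sqT D 2 0 2 0 + g j 0 * g l 1 * sqT D 2 0 2 1 + g j 0 * g l 2 * sqT D 2 0 2 2 + g j 1 * g l 0 * sqT D 2 1 2 0 + g j 1 * g l 1 * sqT D 2 1 2 1 + g j 1 * g l 2 * sqT D 2 1 2 2 + g j 2 * g l 0 * sqT D 2 2 2 0 + g j 2 * g l 1 * sqT D 2 2 2 1 + g j 2 * g l 2 * sqT D 2 2 2 2) * c22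

end AuxStab

/-- (material genericity assumption) if the stabilizer in `SO(3)` of the
covariant `d₂(D)` is contained in the stabilizers of `a` and of `b`, then the stabilizer of
the elasticity tensor `C` equals the stabilizer of its harmonic part `D`. -/
theorem stabilizer_elasticity_eq_stabilizer_D (C : T4) (hC : IsEla C)
    (lam mu : ℝ) (a b : Mat3) (D : T4)
    (ha : aᵀ = a) (ha0 : a.trace = 0) (hb : bᵀ = b) (hb0 : b.trace = 0)
    (hD : IsHarm D) (hdec : HarmDecomp C lam mu a b D)
    (hMGA : ∀ g : Mat3, IsSO3 g → g * d2 D * gᵀ = d2 D →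
      g * a * gᵀ = a ∧ g * b * gᵀ = b) :
    ∀ g : Mat3, IsSO3 g → (act g C = C ↔ act g D = D) := by
  intro g hgSO
  obtain ⟨hg1, hdet⟩ := hgSO
  have hg2 : gᵀ * g = 1 := mul_eq_one_comm.mp hg1
  have hrow : ∀ x y, g x 0 * g y 0 + g x 1 * g y 1 + g x 2 * g y 2 = kd x y := by
    intro x y
    have h := congrFun (congrFun hg1 x) y
    simp only [Matrix.mul_apply, Matrix.transpose_apply, Fin.sum_univ_three,
      Matrix.one_apply] at h
    simpa [kd] using h
  have hcol : ∀ x y, g 0 x * g 0 y + g 1 x * g 1 y + g 2 x * g 2 y = kd x y := by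
    intro x y
    have h := congrFun (congrFun hg2 x) y
    simp only [Matrix.mul_apply, Matrix.transpose_apply, Fin.sum_univ_three,
      Matrix.one_apply] at h
    simpa [kd] using h
  have hDt1e : ∀ x y, D 0 0 x y + D 1 1 x y + D 2 2 x y = 0 := by
    intro x y
    have h := hD.2.2.2 x y
    rwa [Fin.sum_univ_three] at h
  have hDt2e : ∀ x y, D 0 x 0 y + D 1 x 1 y + D 2 x 2 y = 0 := by
    intro x y
    rw [hD.2.1 0 x 0 y, hD.2.1 1 x 1 y, hD.2.1 2 x 2 y]
    exact hDt1e x y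
  have hdecg := act_decomp g hrow C lam mu a b D hdec
  constructor
  · intro hCg
    rw [hCg] at hdecg
    have hsa' : (g * a * gᵀ)ᵀ = g * a * gᵀ := by
      rw [Matrix.transpose_mul, Matrix.transpose_mul, Matrix.transpose_transpose, ha,
        Matrix.mul_assoc]
    have hsb' : (g * b * gᵀ)ᵀ = g * b * gᵀ := by
      rw [Matrix.transpose_mul, Matrix.transpose_mul, Matrix.transpose_transpose, hb,
        Matrix.mul_assoc]
    have hta' : (g * a * gᵀ) 0 0 + (g * a * gᵀ) 1 1 + (g * a * gᵀ) 2 2 = 0 := by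
      have h : (g * a * gᵀ).trace = 0 := by
        rw [Matrix.trace_mul_cycle, hg2, Matrix.one_mul]
        exact ha0
      simpa [Matrix.trace, Matrix.diag, Fin.sum_univ_three] using h
    have htb' : (g * b * gᵀ) 0 0 + (g * b * gᵀ) 1 1 + (g * b * gᵀ) 2 2 = 0 := by
      have h : (g * b * gᵀ).trace = 0 := by
        rw [Matrix.trace_mul_cycle, hg2, Matrix.one_mul]
        exact hb0
      simpa [Matrix.trace, Matrix.diag, Fin.sum_univ_three] using h
    have ta0 : a 0 0 + a 1 1 + a 2 2 = 0 := by
      simpa [Matrix.trace, Matrix.diag, Fin.sum_univ_three] using ha0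
    have tb0 : b 0 0 + b 1 1 + b 2 2 = 0 := by
      simpa [Matrix.trace, Matrix.diag, Fin.sum_univ_three] using hb0
    have hab : ∀ x y : Fin 3, a x y = (g * a * gᵀ) x y ∧ b x y = (g * b * gᵀ) x y := by
      intro x y
      have e1 := (trace1_gen C lam mu a b D hdec hDt1e x y).symm.trans
        (trace1_gen C lam mu (g * a * gᵀ) (g * b * gᵀ) (act g D) hdecg
          (actD_tr1 g D hcol hDt1e) x y)
      have e2 := (trace2_gen C lam mu a b D hdec hDt2e x y).symm.trans
        (trace2_gen C lam mu (g * a * gᵀ) (g * b * gᵀ) (act g D) hdecg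
          (actD_tr2 g D hcol hDt2e) x y)
      have sa : a x y = a y x := by
        have h := congrFun (congrFun ha x) y
        rw [Matrix.transpose_apply] at h
        exact h.symm
      have sa' : (g * a * gᵀ) x y = (g * a * gᵀ) y x := by
        have h := congrFun (congrFun hsa' x) y
        rw [Matrix.transpose_apply] at h
        exact h.symm
      have sb : b x y = b y x := by
        have h := congrFun (congrFun hb x) y
        rw [Matrix.transpose_apply] at h
        exact h.symm
      have sb' : (g * b * gᵀ) x y = (g * b * gᵀ) y x := by
        have h := congrFun (congrFun hsb' x) y
        rw [Matrix.transpose_apply] at h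
        exact h.symm
      have E1 : 3*(a x y - (g * a * gᵀ) x y) + 4*(b x y - (g * b * gᵀ) x y) = 0 := by
        linear_combination e1 - kd x y * ta0 + kd x y * hta' + 2 * sb - 2 * sb'
      have E2 : 2*(a x y - (g * a * gᵀ) x y) + 5*(b x y - (g * b * gᵀ) x y) = 0 := by
        linear_combination e2 - kd x y * tb0 + kd x y * htb' + sa - sa'
      constructor
      · linarith [E1, E2]
      · linarith [E1, E2]
    funext i j k l
    have h1 : C i j k l =
        lam * kd i j * kd k l + mu * (kd i k * kd j l + kd i l * kd j k) +
        kd i j * a k l + kd k l * a i j +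
        kd i k * b j l + kd j l * b i k + kd i l * b j k + kd j k * b i l +
        D i j k l := hdec i j k l
    have h2 : C i j k l =
        lam * kd i j * kd k l + mu * (kd i k * kd j l + kd i l * kd j k) +
        kd i j * (g * a * gᵀ) k l + kd k l * (g * a * gᵀ) i j +
        kd i k * (g * b * gᵀ) j l + kd j l * (g * b * gᵀ) i k +
        kd i l * (g * b * gᵀ) j k + kd j k * (g * b * gᵀ) i l +
        act g D i j k l := hdecg i j k l
    linear_combination h1 - h2 + kd i j * (hab k l).1 + kd k l * (hab i j).1 +
      kd i k * (hab j l).2 + kd j l * (hab i k).2 + kd i l * (hab j k).2 +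
      kd j k * (hab i l).2
  · intro hDg
    have hcov : g * d2 D * gᵀ = d2 D := by
      rw [← d2_cov g hg1 D, hDg]
    obtain ⟨hga, hgb⟩ := hMGA g ⟨hg1, hdet⟩ hcov
    funext i j k l
    rw [show act g C i j k l =
        lam * kd i j * kd k l + mu * (kd i k * kd j l + kd i l * kd j k) +
        kd i j * (g * a * gᵀ) k l + kd k l * (g * a * gᵀ) i j +
        kd i k * (g * b * gᵀ) j l + kd j l * (g * b * gᵀ) i k +
        kd i l * (g * b * gᵀ) j k + kd j k * (g * b * gᵀ) i l +
        act g D i j k l from hdecg i j k l, hga, hgb, hDg]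
    exact (hdec i j k l).symm
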